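/- The number of cyclic-interval partitions of the set {1,...,n} equals 2^n - n, where a cyclic-interval partition is a set partition each of whose blocks is an interval {i, i+1, ..., j} or the complement of an interval in {1,...,n}. -/

import Mathlib

/-- A block is a (possibly one-element) interval `{i, i+1, ..., j}` of `Fin n`. -/
def IsIntervalBlock {n : ℕ} (B : Finset (Fin n)) : Prop :=
  ∃ i j : Fin n, B = Finset.Icc i j

/-- A set partition of `{1,…,n}` (modeled as `Fin n`) each of whose blocks is an
interval or the complement of an interval. -/
def IsCyclicIntervalPartition {n : ℕ} (P : Finset (Finset (Fin n))) : Prop :=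
  (∀ B ∈ P, B.Nonempty) ∧
  (∀ B ∈ P, ∀ C ∈ P, B ≠ C → Disjoint B C) ∧
  (P.sup id = Finset.univ) ∧
  (∀ B ∈ P, IsIntervalBlock B ∨ ∃ C : Finset (Fin n), IsIntervalBlock C ∧ B = Cᶜ)

set_option linter.unusedSectionVars false

namespace CIP
open Finset
open Fin.NatCast Fin.CommRing

variable {n : ℕ}

lemma val_sub_of_lt [NeZero n] {a b : Fin n} (h : a.val < b.val) :
    (a - b).val = n + a.val - b.val := by
  rw [Fin.sub_def]
  have hb : b.val < n := b.isLt
  have hlt : n - b.val + a.val < n := by omega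
  simp only [Nat.mod_eq_of_lt hlt]
  omega

lemma val_sub_of_le' [NeZero n] {a b : Fin n} (h : b.val ≤ a.val) :
    (a - b).val = a.val - b.val := Fin.sub_val_of_le (by exact h)

lemma val_add_nat [NeZero n] (a : Fin n) (k : ℕ) (h : a.val + k < n) :
    (a + (k : Fin n)).val = a.val + k := by
  have hk : k < n := by omega
  rw [Fin.val_add, Fin.val_natCast, Nat.mod_eq_of_lt hk, Nat.mod_eq_of_lt h]

/-- arc of length `L` starting at `a`, going upward cyclically -/
lemma val_ne_zero [NeZero n] {a : Fin n} (h : a ≠ 0) : a.val ≠ 0 :=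
  fun h0 => h (Fin.ext (by simpa using h0))

def genArc [NeZero n] (a : Fin n) (L : ℕ) : Finset (Fin n) :=
  (Finset.range L).image (fun k : ℕ => a + (k : Fin n))

lemma mem_genArc [NeZero n] {a x : Fin n} {L : ℕ} (hL : L ≤ n) :
    x ∈ genArc a L ↔ (x - a).val < L := by
  constructor
  · rintro hx
    obtain ⟨k, hk, rfl⟩ := Finset.mem_image.mp hx
    rw [Finset.mem_range] at hk
    have hkn : k < n := lt_of_lt_of_le hk hL
    have heq : a + (k : Fin n) - a = (k : Fin n) := by ring
    rw [heq, Fin.val_natCast, Nat.mod_eq_of_lt hkn]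
    exact hk
  · intro hx
    refine Finset.mem_image.mpr ⟨(x - a).val, Finset.mem_range.mpr hx, ?_⟩
    rw [Fin.cast_val_eq_self]
    ring

lemma genArc_compl [NeZero n] (a : Fin n) {L : ℕ} (hL : L ≤ n) :
    (genArc a L)ᶜ = genArc (a + (L : Fin n)) (n - L) := by
  rcases eq_or_lt_of_le hL with heq | hLn
  · subst heq
    have h1 : genArc a L = Finset.univ := by
      ext x; simp only [Finset.mem_univ, iff_true]
      exact (mem_genArc le_rfl).mpr (x - a).isLt
    have h2 : genArc (a + (L : Fin L)) (L - L) = (∅ : Finset (Fin L)) := by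
      simp [genArc]
    rw [h1, h2, Finset.compl_univ]
  · ext x
    rw [Finset.mem_compl, mem_genArc hL, mem_genArc (Nat.sub_le n L), not_lt]
    have key : x - (a + (L : Fin n)) = (x - a) - (L : Fin n) := by ring
    rw [key]
    have hLv : ((L : Fin n)).val = L := by rw [Fin.val_natCast, Nat.mod_eq_of_lt hLn]
    constructor
    · intro h
      rw [val_sub_of_le' (by rw [hLv]; exact h), hLv]
      have := (x - a).isLt
      omega
    · intro h
      by_contra hc
      push_neg at hc
      rw [val_sub_of_lt (by rw [hLv]; exact hc), hLv] at h
      omega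

lemma genArc_eq_Icc [NeZero n] (a : Fin n) {L : ℕ} (hL0 : 0 < L) (h : a.val + L ≤ n) :
    genArc a L = Finset.Icc a ⟨a.val + L - 1, by omega⟩ := by
  ext x
  rw [mem_genArc (by omega), Finset.mem_Icc]
  have hx := x.isLt
  have ha := a.isLt
  constructor
  · intro hlt
    rcases le_or_gt a.val x.val with hax | hax
    · rw [val_sub_of_le' hax] at hlt
      exact ⟨hax, by simp only [Fin.le_def]; omega⟩
    · rw [val_sub_of_lt hax] at hlt; omega
  · rintro ⟨h1, h2⟩
    rw [Fin.le_def] at h1 h2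
    simp only at h2
    rw [val_sub_of_le' h1]
    omega

lemma Icc_eq_genArc [NeZero n] {i j : Fin n} (h : i ≤ j) :
    Finset.Icc i j = genArc i (j.val + 1 - i.val) := by
  rw [Fin.le_def] at h
  rw [genArc_eq_Icc i (by omega) (by have := j.isLt; omega)]
  congr 1
  apply Fin.ext
  simp only
  omega

lemma genArc_isInterval [NeZero n] (a : Fin n) {L : ℕ} (hL0 : 0 < L) (h : a.val + L ≤ n) :
    IsIntervalBlock (genArc a L) :=
  ⟨a, ⟨a.val + L - 1, by omega⟩, genArc_eq_Icc a hL0 h⟩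

lemma genArc_shape [NeZero n] (a : Fin n) {L : ℕ} (hL0 : 0 < L) (hLn : L ≤ n) :
    IsIntervalBlock (genArc a L) ∨
      ∃ C : Finset (Fin n), IsIntervalBlock C ∧ genArc a L = Cᶜ := by
  rcases eq_or_lt_of_le hLn with heq | hLn'
  · subst heq
    left
    have h1 : genArc a L = genArc (0 : Fin L) L := by
      ext x
      simp only [mem_genArc le_rfl]
      exact ⟨fun _ => (x - 0).isLt, fun _ => (x - a).isLt⟩
    rw [h1]
    exact genArc_isInterval _ hL0 (by simp)
  · rcases le_or_gt (a.val + L) n with hle | hgt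
    · exact Or.inl (genArc_isInterval a hL0 hle)
    · right
      refine ⟨genArc (a + (L : Fin n)) (n - L), ?_, ?_⟩
      · have hval : (a + (L : Fin n)).val = a.val + L - n := by
          rw [Fin.val_add, Fin.val_natCast, Nat.mod_eq_of_lt hLn',
            Nat.mod_eq_sub_mod (by omega), Nat.mod_eq_of_lt (by have := a.isLt; omega)]
        apply genArc_isInterval
        · omega
        · rw [hval]; have := a.isLt; omega
      · rw [← genArc_compl a hLn, compl_compl]

section Partition

variable (P : Finset (Finset (Fin n)))

def SameBlock (x y : Fin n) : Prop := ∃ B ∈ P, x ∈ B ∧ y ∈ B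

def IsCut [NeZero n] (i : Fin n) : Prop := ¬ SameBlock P i (i + 1)

noncomputable def cuts [NeZero n] : Finset (Fin n) :=
  @Finset.filter _ (fun i => IsCut P i) (Classical.decPred _) Finset.univ

lemma mem_cuts [NeZero n] {i : Fin n} : i ∈ cuts P ↔ IsCut P i := by
  classical
  simp [cuts, Finset.mem_filter]

variable {P}

lemma cover (hP : IsCyclicIntervalPartition P) (x : Fin n) : ∃ B ∈ P, x ∈ B := by
  have hx : x ∈ P.sup id := hP.2.2.1 ▸ Finset.mem_univ x
  simpa using Finset.mem_sup.mp hx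

lemma sameBlock_refl (hP : IsCyclicIntervalPartition P) (x : Fin n) : SameBlock P x x := by
  obtain ⟨B, hB, hx⟩ := cover hP x
  exact ⟨B, hB, hx, hx⟩

lemma sameBlock_symm {x y : Fin n} (h : SameBlock P x y) : SameBlock P y x := by
  obtain ⟨B, hB, hx, hy⟩ := h
  exact ⟨B, hB, hy, hx⟩

lemma blocks_eq (hP : IsCyclicIntervalPartition P) {B C : Finset (Fin n)} (hB : B ∈ P)
    (hC : C ∈ P) {y : Fin n} (hyB : y ∈ B) (hyC : y ∈ C) : B = C := by
  by_contra hne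
  exact (Finset.disjoint_left.mp (hP.2.1 B hB C hC hne)) hyB hyC

lemma sameBlock_trans (hP : IsCyclicIntervalPartition P) {x y z : Fin n}
    (h1 : SameBlock P x y) (h2 : SameBlock P y z) : SameBlock P x z := by
  obtain ⟨B, hB, hx, hy⟩ := h1
  obtain ⟨C, hC, hy', hz⟩ := h2
  exact ⟨B, hB, hx, (blocks_eq hP hB hC hy hy') ▸ hz⟩

lemma mem_block_iff (hP : IsCyclicIntervalPartition P) {B : Finset (Fin n)} (hB : B ∈ P)
    {x : Fin n} (hx : x ∈ B) (y : Fin n) : y ∈ B ↔ SameBlock P x y := by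
  constructor
  · intro hy; exact ⟨B, hB, hx, hy⟩
  · rintro ⟨C, hC, hxC, hyC⟩
    exact (blocks_eq hP hB hC hx hxC) ▸ hyC

lemma chain [NeZero n] (hP : IsCyclicIntervalPartition P) (x : Fin n) (m : ℕ)
    (h : ∀ k < m, ¬ IsCut P (x + (k : Fin n))) : SameBlock P x (x + (m : Fin n)) := by
  induction m with
  | zero => simpa using sameBlock_refl hP x
  | succ m ih =>
    have h1 : SameBlock P x (x + (m : Fin n)) := ih (fun k hk => h k (by omega))
    have h2 : ¬ IsCut P (x + (m : Fin n)) := h m (by omega)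
    rw [IsCut, not_not] at h2
    have : ((m + 1 : ℕ) : Fin n) = (m : Fin n) + 1 := by push_cast; ring
    rw [this, ← add_assoc]
    exact sameBlock_trans hP h1 h2

/-- the forward arc from x to y is cut-free -/
def CutFree [NeZero n] (Q : Finset (Finset (Fin n))) (x y : Fin n) : Prop :=
  ∀ k : ℕ, k < (y - x).val → ¬ IsCut Q (x + (k : Fin n))

lemma cutFree_sameBlock [NeZero n] (hP : IsCyclicIntervalPartition P) {x y : Fin n}
    (h : CutFree P x y) : SameBlock P x y := by
  have := chain hP x (y - x).val (fun k hk => h k hk)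
  rwa [Fin.cast_val_eq_self, add_sub_cancel] at this

lemma block_shape [NeZero n] (hP : IsCyclicIntervalPartition P) {B : Finset (Fin n)}
    (hB : B ∈ P) : ∃ (a : Fin n) (L : ℕ), 0 < L ∧ L ≤ n ∧ B = genArc a L := by
  obtain ⟨b, hb⟩ := hP.1 B hB
  have hshape := hP.2.2.2 B hB
  have key : ∀ (i j : Fin n), i ≤ j → ∃ (a : Fin n) (L : ℕ), L ≤ n ∧
      Finset.Icc i j = genArc a L := by
    intro i j hij
    exact ⟨i, j.val + 1 - i.val, by have := j.isLt; omega, Icc_eq_genArc hij⟩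
  have main : ∃ (a : Fin n) (L : ℕ), L ≤ n ∧ B = genArc a L := by
    rcases hshape with ⟨i, j, rfl⟩ | ⟨C, ⟨i, j, rfl⟩, rfl⟩
    · rcases le_or_gt i j with hij | hij
      · exact key i j hij
      · exact absurd hb (by simp [Finset.Icc_eq_empty_of_lt hij])
    · rcases le_or_gt i j with hij | hij
      · refine ⟨i + ((j.val + 1 - i.val : ℕ) : Fin n), n - (j.val + 1 - i.val), by omega, ?_⟩
        rw [Icc_eq_genArc hij, genArc_compl i (by have := j.isLt; omega)]
      · rw [Finset.Icc_eq_empty_of_lt hij, Finset.compl_empty]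
        refine ⟨0, n, le_rfl, ?_⟩
        ext x
        simp only [Finset.mem_univ, true_iff]
        exact (mem_genArc le_rfl).mpr (x - 0).isLt
  obtain ⟨a, L, hLn, hBa⟩ := main
  refine ⟨a, L, ?_, hLn, hBa⟩
  rcases Nat.eq_zero_or_pos L with rfl | hL
  · exfalso; rw [hBa] at hb; simp [genArc] at hb
  · exact hL

lemma sameBlock_iff_cutFree [NeZero n] (hP : IsCyclicIntervalPartition P) (x y : Fin n) :
    SameBlock P x y ↔ (CutFree P x y ∨ CutFree P y x) := by
  constructor
  · rintro ⟨B, hB, hx, hy⟩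
    obtain ⟨a, L, hL0, hLn, rfl⟩ := block_shape hP hB
    rw [mem_genArc hLn] at hx hy
    set u := (x - a).val with hu
    set v := (y - a).val with hv
    have harc : ∀ (p q : Fin n), (p - a).val ≤ (q - a).val → (q - a).val < L →
        CutFree P p q := by
      intro p q hpq hqL
      intro k hk
      have hqp : (q - p).val = (q - a).val - (p - a).val := by
        have : q - p = (q - a) - (p - a) := by ring
        rw [this, val_sub_of_le' hpq]
      rw [hqp] at hk
      have hkmem : ∀ m : ℕ, m ≤ (q - a).val - (p - a).val →
          p + (m : Fin n) ∈ genArc a L := by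
        intro m hm
        rw [mem_genArc hLn]
        have h1 : p + (m : Fin n) - a = (p - a) + (m : Fin n) := by ring
        rw [h1, val_add_nat _ m (by omega)]
        omega
      rw [IsCut, not_not]
      have hmem1 := hkmem k (by omega)
      have hmem2 := hkmem (k + 1) (by omega)
      have hcast : p + (k : Fin n) + 1 = p + ((k + 1 : ℕ) : Fin n) := by
        push_cast; ring
      rw [hcast]
      exact ⟨genArc a L, hB, hmem1, hmem2⟩
    rcases le_or_gt u v with huv | huv
    · exact Or.inl (harc x y huv hy)
    · exact Or.inr (harc y x (le_of_lt huv) hx)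
  · rintro (h | h)
    · exact cutFree_sameBlock hP h
    · exact sameBlock_symm (cutFree_sameBlock hP h)

lemma cuts_card_ne_one [NeZero n] (hP : IsCyclicIntervalPartition P) :
    (cuts P).card ≠ 1 := by
  intro hcard
  obtain ⟨i, hi⟩ := Finset.card_eq_one.mp hcard
  have hcut : IsCut P i := (mem_cuts P).mp (hi ▸ Finset.mem_singleton_self i)
  apply hcut
  have hnocut : ∀ k < n - 1, ¬ IsCut P (i + 1 + (k : Fin n)) := by
    intro k hk hbad
    have hmem : i + 1 + (k : Fin n) ∈ cuts P := (mem_cuts P).mpr hbad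
    rw [hi, Finset.mem_singleton] at hmem
    have h0 : ((1 : Fin n) + (k : Fin n)) = 0 := by
      have h' : i + ((1 : Fin n) + (k : Fin n)) = i + 0 := by
        rw [add_zero, ← add_assoc]; exact hmem
      exact add_left_cancel h'
    have h1 : ((k + 1 : ℕ) : Fin n) = 0 := by push_cast; rw [add_comm]; exact h0
    have h2 : n ∣ k + 1 := Fin.natCast_eq_zero.mp h1
    have := Nat.le_of_dvd (by omega) h2
    omega
  have hchain := chain hP (i + 1) (n - 1) hnocut
  have hn : 0 < n := i.pos
  have hend : i + 1 + ((n - 1 : ℕ) : Fin n) = i := by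
    have hc : ((n - 1 : ℕ) : Fin n) + 1 = 0 := by
      have h1 : ((n - 1 : ℕ) : Fin n) + ((1 : ℕ) : Fin n) = ((n - 1 + 1 : ℕ) : Fin n) := by
        rw [Nat.cast_add]
      have h2 : n - 1 + 1 = n := by omega
      rw [show ((1:ℕ) : Fin n) = (1 : Fin n) by push_cast; rfl] at h1
      rw [h1, h2, Fin.natCast_self]
    calc i + 1 + ((n - 1 : ℕ) : Fin n) = i + (((n - 1 : ℕ) : Fin n) + 1) := by ring
    _ = i := by rw [hc, add_zero]
  rw [hend] at hchain
  exact sameBlock_symm hchain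

end Partition

lemma subset_of_cuts_eq [NeZero n] {P Q : Finset (Finset (Fin n))}
    (hP : IsCyclicIntervalPartition P) (hQ : IsCyclicIntervalPartition Q)
    (h : cuts P = cuts Q) : P ⊆ Q := by
  have hcut : ∀ i, IsCut P i ↔ IsCut Q i := fun i => by
    rw [← mem_cuts, ← mem_cuts, h]
  have hsb : ∀ x y, SameBlock P x y ↔ SameBlock Q x y := by
    intro x y
    rw [sameBlock_iff_cutFree hP, sameBlock_iff_cutFree hQ]
    unfold CutFree
    simp only [hcut]
  intro B hB
  obtain ⟨x, hx⟩ := hP.1 B hB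
  obtain ⟨C, hC, hxC⟩ := cover hQ x
  have hBC : B = C := by
    ext y
    rw [mem_block_iff hP hB hx, mem_block_iff hQ hC hxC, hsb]
  exact hBC ▸ hC

lemma partition_eq_of_cuts_eq [NeZero n] {P Q : Finset (Finset (Fin n))}
    (hP : IsCyclicIntervalPartition P) (hQ : IsCyclicIntervalPartition Q)
    (h : cuts P = cuts Q) : P = Q :=
  Finset.Subset.antisymm (subset_of_cuts_eq hP hQ h) (subset_of_cuts_eq hQ hP h.symm)

section Construct

variable [NeZero n] (S : Finset (Fin n))

def blk (i : Fin n) : Finset (Fin n) :=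
  Finset.univ.filter (fun x => ∀ j ∈ S, (i - x).val ≤ (j - x).val)

lemma mem_blk {i x : Fin n} : x ∈ blk S i ↔ ∀ j ∈ S, (i - x).val ≤ (j - x).val := by
  simp [blk]

lemma self_mem_blk (i : Fin n) : i ∈ blk S i := by
  rw [mem_blk]
  intro j hj
  simp

lemma blk_unique {i j x : Fin n} (hi : i ∈ S) (hj : j ∈ S)
    (hxi : x ∈ blk S i) (hxj : x ∈ blk S j) : i = j := by
  have h1 := (mem_blk S).mp hxi j hj
  have h2 := (mem_blk S).mp hxj i hi
  have h3 : i - x = j - x := Fin.val_injective (le_antisymm h1 h2)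
  exact sub_left_injective h3

open Classical in
noncomputable def gap (i : Fin n) : ℕ :=
  if h : (S.erase i).Nonempty then (S.erase i).inf' h (fun j => (i - j).val) else 0

variable {S}

lemma erase_nonempty {i : Fin n} (hS2 : 2 ≤ S.card) : (S.erase i).Nonempty := by
  rw [← Finset.card_pos]
  have h1 := Finset.card_erase_of_mem (s := S) (a := i)
  rcases Finset.decidableMem i S with h | h
  · rw [Finset.erase_eq_of_notMem h]; omega
  · rw [h1 h]; omega

lemma gap_le {i j : Fin n} (hS2 : 2 ≤ S.card) (hj : j ∈ S) (hji : j ≠ i) :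
    gap S i ≤ (i - j).val := by
  rw [gap, dif_pos (erase_nonempty hS2)]
  exact Finset.inf'_le _ (Finset.mem_erase.mpr ⟨hji, hj⟩)

lemma exists_gap {i : Fin n} (hS2 : 2 ≤ S.card) :
    ∃ j ∈ S, j ≠ i ∧ (i - j).val = gap S i := by
  rw [gap, dif_pos (erase_nonempty hS2)]
  obtain ⟨j, hj, hje⟩ := Finset.exists_mem_eq_inf' (erase_nonempty (i := i) hS2)
    (fun j => (i - j).val)
  exact ⟨j, (Finset.mem_erase.mp hj).2, (Finset.mem_erase.mp hj).1, hje.symm⟩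

lemma gap_pos {i : Fin n} (hS2 : 2 ≤ S.card) : 0 < gap S i := by
  obtain ⟨j, _, hji, hje⟩ := exists_gap (i := i) hS2
  rw [← hje]
  have : i - j ≠ 0 := sub_ne_zero_of_ne (Ne.symm hji)
  have := val_ne_zero this
  omega

lemma gap_le_pred {i : Fin n} (hS2 : 2 ≤ S.card) : gap S i ≤ n - 1 := by
  obtain ⟨j, _, hji, hje⟩ := exists_gap (i := i) hS2
  rw [← hje]
  have : i - j ≠ 0 := sub_ne_zero_of_ne (Ne.symm hji)
  have h0 := val_ne_zero this
  have := (i - j).isLt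
  omega

lemma mem_blk_iff_lt {i x : Fin n} (hS2 : 2 ≤ S.card) (hi : i ∈ S) :
    x ∈ blk S i ↔ (i - x).val < gap S i := by
  constructor
  · intro hx
    by_contra hc
    push_neg at hc
    obtain ⟨j, hj, hji, hje⟩ := exists_gap (i := i) hS2
    have hg1 : 1 ≤ (i - j).val := by
      have : i - j ≠ 0 := sub_ne_zero_of_ne (Ne.symm hji)
      have := val_ne_zero this
      omega
    have hle : (i - j).val ≤ (i - x).val := by omega
    have hkey : j - x = (i - x) - (i - j) := by ring
    have hval : (j - x).val = (i - x).val - (i - j).val := by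
      rw [hkey, val_sub_of_le' hle]
    have := (mem_blk S).mp hx j hj
    omega
  · intro hx
    rw [mem_blk]
    intro j hj
    rcases eq_or_ne j i with rfl | hji
    · exact le_rfl
    · have hg : gap S i ≤ (i - j).val := gap_le hS2 hj hji
      have hlt : (i - x).val < (i - j).val := by omega
      have hkey : j - x = (i - x) - (i - j) := by ring
      have hval : (j - x).val = n + (i - x).val - (i - j).val := by
        rw [hkey, val_sub_of_lt hlt]
      have := (i - j).isLt
      omega

lemma blk_eq_genArc {i : Fin n} (hS2 : 2 ≤ S.card) (hi : i ∈ S) :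
    blk S i = genArc (i - ((gap S i - 1 : ℕ) : Fin n)) (gap S i) := by
  have hg0 := gap_pos (i := i) hS2
  have hgn := gap_le_pred (i := i) hS2
  have hn2 : 2 ≤ n := by
    have h1 : S.card ≤ n := by
      have := Finset.card_le_univ S
      simpa using this
    omega
  ext x
  rw [mem_blk_iff_lt hS2 hi, mem_genArc (by omega)]
  set g := gap S i with hg
  have hgv : ((g - 1 : ℕ) : Fin n).val = g - 1 := by
    rw [Fin.val_natCast, Nat.mod_eq_of_lt (by omega)]
  have hkey : x - (i - ((g - 1 : ℕ) : Fin n)) = ((g - 1 : ℕ) : Fin n) - (i - x) := by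
    ring
  rw [hkey]
  set t := (i - x).val with ht
  have htn := (i - x).isLt
  rcases le_or_gt t (g - 1) with hle | hlt
  · rw [val_sub_of_le' (by omega)]
    omega
  · rw [val_sub_of_lt (by omega)]
    omega

def part (T : Finset (Fin n)) : Finset (Finset (Fin n)) := T.image (fun i => blk T i)

lemma part_isPartition (hS2 : 2 ≤ S.card) : IsCyclicIntervalPartition (part S) := by
  refine ⟨?_, ?_, ?_, ?_⟩
  · rintro B hB
    obtain ⟨i, hi, rfl⟩ := Finset.mem_image.mp hB
    exact ⟨i, self_mem_blk S i⟩
  · rintro B hB C hC hne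
    obtain ⟨i, hi, rfl⟩ := Finset.mem_image.mp hB
    obtain ⟨j, hj, rfl⟩ := Finset.mem_image.mp hC
    rw [Finset.disjoint_left]
    intro x hxi hxj
    exact hne (by rw [blk_unique S hi hj hxi hxj])
  · apply Finset.eq_univ_of_forall
    intro x
    rw [Finset.mem_sup]
    obtain ⟨i, hi, hmin⟩ := Finset.exists_min_image S (fun j => (j - x).val)
      (Finset.card_pos.mp (by omega))
    refine ⟨blk S i, Finset.mem_image_of_mem _ hi, ?_⟩
    rw [id, mem_blk]
    exact hmin
  · rintro B hB
    obtain ⟨i, hi, rfl⟩ := Finset.mem_image.mp hB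
    rw [blk_eq_genArc hS2 hi]
    exact genArc_shape _ (gap_pos hS2) (by have := gap_le_pred (i := i) hS2; omega)

lemma cuts_part (hS2 : 2 ≤ S.card) : cuts (part S) = S := by
  have hn2 : 2 ≤ n := by
    have h1 : S.card ≤ n := by
      have := Finset.card_le_univ S
      simpa using this
    omega
  have hone : (1 : Fin n).val = 1 := by
    rw [Fin.val_one']
    exact Nat.mod_eq_of_lt (by omega)
  ext i
  rw [mem_cuts]
  constructor
  · intro hcut
    by_contra hiS
    apply hcut
    obtain ⟨j, hj, hmin⟩ := Finset.exists_min_image S (fun j' => (j' - i).val)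
      (Finset.card_pos.mp (by omega))
    have hiblk : i ∈ blk S j := (mem_blk S).mpr (by
      intro j' hj'
      have h1 : (j - i) = j - i := rfl
      exact hmin j' hj')
    have hstep : ∀ j' : Fin n, j' ∈ S → (j' - (i + 1)).val = (j' - i).val - 1 ∧
        1 ≤ (j' - i).val := by
      intro j' hj'
      have hne : j' - i ≠ 0 := sub_ne_zero_of_ne (by rintro rfl; exact hiS hj')
      have hpos : 1 ≤ (j' - i).val := by
        have := val_ne_zero hne
        omega
      have hkey : j' - (i + 1) = (j' - i) - 1 := by ring
      rw [hkey, val_sub_of_le' (by omega)]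
      exact ⟨by omega, hpos⟩
    have hi1blk : i + 1 ∈ blk S j := (mem_blk S).mpr (by
      intro j' hj'
      obtain ⟨he1, hp1⟩ := hstep j hj
      obtain ⟨he2, hp2⟩ := hstep j' hj'
      have := hmin j' hj'
      omega)
    exact ⟨blk S j, Finset.mem_image_of_mem _ hj, hiblk, hi1blk⟩
  · intro hiS hsame
    obtain ⟨B, hB, hi', hi1⟩ := hsame
    obtain ⟨j, hj, rfl⟩ := Finset.mem_image.mp hB
    have hji : j = i := blk_unique S hj hiS hi' (self_mem_blk S i)
    subst hji
    rw [mem_blk_iff_lt hS2 hj] at hi1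
    have hval : (j - (j + 1)).val = n - 1 := by
      have hkey : j - (j + 1) = 0 - 1 := by ring
      have h1n : 1 % n = 1 := Nat.mod_eq_of_lt (by omega)
      rw [hkey, val_sub_of_lt (by simp [Fin.val_one', h1n])]
      simp [Fin.val_one', h1n]
    have := gap_le_pred (i := j) hS2
    omega

end Construct

lemma genArc_univ [NeZero n] : genArc (0 : Fin n) n = Finset.univ := by
  ext x
  simp only [Finset.mem_univ, iff_true]
  exact (mem_genArc le_rfl).mpr (x - 0).isLt

lemma univ_partition [NeZero n] :
    IsCyclicIntervalPartition ({Finset.univ} : Finset (Finset (Fin n))) := by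
  refine ⟨?_, ?_, ?_, ?_⟩
  · intro B hB
    rw [Finset.mem_singleton] at hB
    subst hB
    exact Finset.univ_nonempty
  · intro B hB C hC hne
    rw [Finset.mem_singleton] at hB hC
    exact absurd (hB.trans hC.symm) hne
  · simp
  · intro B hB
    rw [Finset.mem_singleton] at hB
    subst hB
    rw [← genArc_univ]
    exact genArc_shape _ (Nat.pos_of_ne_zero (NeZero.ne n)) le_rfl

lemma cuts_univ_partition [NeZero n] :
    cuts ({Finset.univ} : Finset (Finset (Fin n))) = ∅ := by
  ext i
  rw [mem_cuts]
  simp only [Finset.notMem_empty, iff_false]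
  intro hcut
  exact hcut ⟨Finset.univ, Finset.mem_singleton_self _, Finset.mem_univ _, Finset.mem_univ _⟩

lemma card_ne_one_subtype (n : ℕ) :
    Nat.card {S : Finset (Fin n) // S.card ≠ 1} = 2 ^ n - n := by
  classical
  rw [Nat.card_eq_fintype_card, Fintype.card_subtype]
  have h1 : (Finset.univ.filter fun S : Finset (Fin n) => S.card = 1).card = n := by
    have himg : (Finset.univ.filter fun S : Finset (Fin n) => S.card = 1)
        = Finset.univ.image (fun a : Fin n => ({a} : Finset (Fin n))) := by
      ext S
      simp [Finset.card_eq_one, eq_comm]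
    rw [himg, Finset.card_image_of_injective _ (fun a b h => by simpa using h)]
    simp
  have h2 := Finset.card_filter_add_card_filter_not
    (s := (Finset.univ : Finset (Finset (Fin n)))) (fun S => S.card = 1)
  have h3 : (Finset.univ : Finset (Finset (Fin n))).card = 2 ^ n := by
    rw [Finset.card_univ, Fintype.card_finset, Fintype.card_fin]
  have h4 : (Finset.univ.filter fun S : Finset (Fin n) => ¬ S.card = 1).card
      = (Finset.univ.filter fun S : Finset (Fin n) => S.card ≠ 1).card := by
    congr 1
  omega

noncomputable def cutsMap (N : ℕ) [NeZero N] :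
    {P : Finset (Finset (Fin N)) // IsCyclicIntervalPartition P} →
      {S : Finset (Fin N) // S.card ≠ 1} :=
  fun P => ⟨CIP.cuts P.1, CIP.cuts_card_ne_one P.2⟩

end CIP

private theorem card_cyclicIntervalPartitions_aux (n : ℕ) :
    Nat.card {P : Finset (Finset (Fin n)) // IsCyclicIntervalPartition P} = 2 ^ n - n := by
  rcases n with _ | m
  · rw [show (2:ℕ) ^ 0 - 0 = 1 from rfl, Nat.card_eq_one_iff_unique]
    constructor
    · constructor
      rintro ⟨P, hP⟩ ⟨Q, hQ⟩
      have key : ∀ R : Finset (Finset (Fin 0)), IsCyclicIntervalPartition R → R = ∅ := by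
        intro R hR
        rw [Finset.eq_empty_iff_forall_notMem]
        intro B hB
        obtain ⟨x, _⟩ := hR.1 B hB
        exact x.elim0
      exact Subtype.ext ((key P hP).trans (key Q hQ).symm)
    · refine ⟨⟨∅, ?_, ?_, ?_, ?_⟩⟩
      · intro B hB; simp at hB
      · intro B hB; simp at hB
      · simp [Finset.univ_eq_empty]
      · intro B hB; simp at hB
  · set N := m + 1 with hN
    have hbij : Function.Bijective (CIP.cutsMap N) := by
      constructor
      · rintro ⟨P, hP⟩ ⟨Q, hQ⟩ h
        exact Subtype.ext (CIP.partition_eq_of_cuts_eq hP hQ (congrArg Subtype.val h))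
      · rintro ⟨S, hS⟩
        rcases Nat.lt_or_ge S.card 2 with hlt | hge
        · have hS0 : S.card = 0 := by omega
          rw [Finset.card_eq_zero] at hS0
          subst hS0
          exact ⟨⟨{Finset.univ}, CIP.univ_partition⟩, Subtype.ext CIP.cuts_univ_partition⟩
        · exact ⟨⟨CIP.part S, CIP.part_isPartition hge⟩, Subtype.ext (CIP.cuts_part hge)⟩
    rw [Nat.card_congr (Equiv.ofBijective _ hbij)]
    exact CIP.card_ne_one_subtype N

/-- The number of cyclic-interval partitions of `{1,…,n}` is `2^n - n`. -/
theorem card_cyclicIntervalPartitions (n : ℕ) :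
    Nat.card {P : Finset (Finset (Fin n)) // IsCyclicIntervalPartition P} = 2 ^ n - n :=
  card_cyclicIntervalPartitions_aux n
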